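/- Let n be a nonzero integer and k₀ = π n. The function z(x) = cos(π n x) + i sin(π x / 2) sin(π n x) satisfies z(±1) ≠ 0 and the outgoing boundary conditions z'(1) = i k₀ z(1) and z'(-1) = -i k₀ z(-1). -/

import Mathlib

/-- The ansatz z = cos(πnx) + i sin(πx/2) sin(πnx) satisfies the outgoing boundary
conditions for k₀ = πn and is nonvanishing at the endpoints. -/
theorem stmt_5 (n : ℤ) (hn : n ≠ 0) (k₀ : ℝ) (hk : k₀ = Real.pi * n)
    (z : ℝ → ℂ)
    (hzdef : ∀ x : ℝ, z x = (Real.cos (Real.pi * n * x) : ℝ) +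
      Complex.I * (Real.sin (Real.pi * x / 2) * Real.sin (Real.pi * n * x) : ℝ)) :
    z 1 ≠ 0 ∧ z (-1) ≠ 0 ∧
    deriv z 1 = Complex.I * k₀ * z 1 ∧
    deriv z (-1) = -(Complex.I * k₀) * z (-1) := by
  have hz : z = fun x => ((Real.cos (Real.pi * n * x) : ℝ) : ℂ) +
      Complex.I * ((Real.sin (Real.pi * x / 2) * Real.sin (Real.pi * n * x) : ℝ) : ℂ) :=
    funext hzdef
  have hsin : Real.sin (Real.pi * n) = 0 := by
    rw [mul_comm]; exact Real.sin_int_mul_pi n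
  have hcos : Real.cos (Real.pi * n) = (-1 : ℝ) ^ n := by
    rw [mul_comm]; simpa using Real.cos_int_mul_pi_sub 0 n
  have hcosne : Real.cos (Real.pi * n) ≠ 0 := by
    rw [hcos]; positivity
  have hd : ∀ x : ℝ, HasDerivAt z
      (((-(Real.pi * n) * Real.sin (Real.pi * n * x) : ℝ) : ℂ) +
        Complex.I * ((Real.pi / 2 * Real.cos (Real.pi * x / 2) * Real.sin (Real.pi * n * x)
          + Real.pi * n * Real.sin (Real.pi * x / 2) * Real.cos (Real.pi * n * x) : ℝ) : ℂ)) x := by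
    intro x
    have h1 : HasDerivAt (fun x : ℝ => Real.pi * n * x) (Real.pi * n) x := by
      simpa using (hasDerivAt_id x).const_mul (Real.pi * n)
    have h2 : HasDerivAt (fun x : ℝ => Real.pi * x / 2) (Real.pi / 2) x := by
      simpa [mul_div_assoc] using ((hasDerivAt_id x).const_mul Real.pi).div_const 2
    have hc := h1.cos
    have hp := (h2.sin).mul (h1.sin)
    have := (hc.ofReal_comp).add ((hp.ofReal_comp).const_mul Complex.I)
    rw [hz]
    convert this using 1
    case e'_8 => rfl
    case e'_4 => rfl
    push_cast
    ring
  have hz1 : z 1 = ((Real.cos (Real.pi * n) : ℝ) : ℂ) := by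
    rw [hzdef]; simp [hsin]
  have hzm1 : z (-1) = ((Real.cos (Real.pi * n) : ℝ) : ℂ) := by
    rw [hzdef]
    simp [hsin, Real.sin_neg, Real.cos_neg, mul_comm, mul_neg]
  have hne : ((Real.cos (Real.pi * n) : ℝ) : ℂ) ≠ 0 := by
    exact_mod_cast hcosne
  have hs1 : Real.sin (Real.pi * 1 / 2) = 1 := by rw [mul_one, Real.sin_pi_div_two]
  have hsm1 : Real.sin (Real.pi * (-1) / 2) = -1 := by
    rw [mul_neg, mul_one, neg_div, Real.sin_neg, Real.sin_pi_div_two]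
  refine ⟨hz1 ▸ hne, hzm1 ▸ hne, ?_, ?_⟩
  · rw [(hd 1).deriv, hz1, hk]
    rw [show Real.pi * ↑n * 1 = Real.pi * n by ring]
    rw [hsin, hs1]
    push_cast
    ring
  · rw [(hd (-1)).deriv, hzm1, hk]
    rw [show Real.pi * ↑n * (-1) = -(Real.pi * n) by ring, Real.sin_neg, Real.cos_neg]
    rw [hsin, hsm1]
    push_cast
    ring
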